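/- Let (Ω, Σ, μ) be a measure space with 0 < μ(Ω) < ∞, let f, g ∈ L²(Ω, 𝕜) (𝕜 = ℝ or ℂ), and let z, Z, t, T ∈ 𝕜 with Re(Z·conj(z)) > 0 and Re(T·conj(t)) > 0 be such that Re[(Z − f(s))·(conj(f(s)) − conj(z))] ≥ 0 and Re[(T − g(s))·(conj(g(s)) − conj(t))] ≥ 0 for μ-a.e. s ∈ Ω. Then |(1/μ(Ω))∫_Ω f(s)conj(g(s)) dμ − (1/μ(Ω))∫_Ω f(s) dμ · (1/μ(Ω))∫_Ω conj(g(s)) dμ| ≤ (1/4)·M(z,Z)·M(t,T)·|(1/μ(Ω))∫_Ω f(s) dμ · (1/μ(Ω))∫_Ω conj(g(s)) dμ|, where M(c,C) := [((|C| − |c|)² + 4(|C·conj(c)| − Re(C·conj(c))))/Re(C·conj(c))]^{1/2}. -/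

import Mathlib

open MeasureTheory

/-- The constant `M(c, C)`. -/
noncomputable def grussM {𝕜 : Type*} [RCLike 𝕜] (c C : 𝕜) : ℝ :=
  Real.sqrt (((‖C‖ - ‖c‖) ^ 2 +
      4 * (‖C * starRingEnd 𝕜 c‖ - RCLike.re (C * starRingEnd 𝕜 c))) /
    RCLike.re (C * starRingEnd 𝕜 c))

section Aux

open RCLike

variable {Ω 𝕜 : Type*} [MeasurableSpace Ω] [RCLike 𝕜] {μ : Measure Ω}

lemma grussM_nonneg (c C : 𝕜) : 0 ≤ grussM c C := Real.sqrt_nonneg _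

lemma grussM_sq_mul {c C : 𝕜} (h : 0 < RCLike.re (C * starRingEnd 𝕜 c)) :
    RCLike.re (C * starRingEnd 𝕜 c) * grussM c C ^ 2 =
      (‖C‖ - ‖c‖) ^ 2 + 4 * (‖C‖ * ‖c‖ - RCLike.re (C * starRingEnd 𝕜 c)) := by
  have hnum : 0 ≤ (‖C‖ - ‖c‖) ^ 2 +
      4 * (‖C * starRingEnd 𝕜 c‖ - RCLike.re (C * starRingEnd 𝕜 c)) := by
    nlinarith [RCLike.re_le_norm (C * starRingEnd 𝕜 c), sq_nonneg (‖C‖ - ‖c‖)]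
  rw [grussM, Real.sq_sqrt (div_nonneg hnum h.le)]
  rw [norm_mul, RCLike.norm_conj, mul_comm, div_mul_cancel₀ _ h.ne']

lemma memℒp_conj {g : Ω → 𝕜} {p : ENNReal} (hg : MemLp g p μ) :
    MemLp (fun s => starRingEnd 𝕜 (g s)) p μ :=
  hg.of_le (RCLike.continuous_conj.comp_aestronglyMeasurable hg.1)
    (Filter.Eventually.of_forall fun s => by simp)

lemma integrable_mul_conj {f g : Ω → 𝕜} (hf : MemLp f 2 μ) (hg : MemLp g 2 μ) :
    Integrable (fun s => f s * starRingEnd 𝕜 (g s)) μ := by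
  have h := L2.integrable_inner (𝕜 := 𝕜) (hg.toLp g) (hf.toLp f)
  refine h.congr ?_
  filter_upwards [hf.coeFn_toLp, hg.coeFn_toLp] with s h1 h2
  simp [RCLike.inner_apply', h1, h2, mul_comm]

lemma cs_aux {F G : Ω → 𝕜} (hF : MemLp F 2 μ) (hG : MemLp G 2 μ) :
    ‖∫ s, F s * starRingEnd 𝕜 (G s) ∂μ‖ ^ 2 ≤
      (∫ s, ‖F s‖ ^ 2 ∂μ) * (∫ s, ‖G s‖ ^ 2 ∂μ) := by
  set F' := hF.toLp F with hF'
  set G' := hG.toLp G with hG'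
  have hI : (inner 𝕜 G' F') = ∫ s, F s * starRingEnd 𝕜 (G s) ∂μ := by
    rw [L2.inner_def]
    refine integral_congr_ae ?_
    filter_upwards [hF.coeFn_toLp, hG.coeFn_toLp] with s h1 h2
    simp only [RCLike.inner_apply']
    rw [h1, h2, mul_comm]
  have hnorm : ∀ (H : Ω → 𝕜) (hH : MemLp H 2 μ),
      ‖hH.toLp H‖ ^ 2 = ∫ s, ‖H s‖ ^ 2 ∂μ := by
    intro H hH
    rw [norm_sq_eq_re_inner (𝕜 := 𝕜), L2.inner_def,
      ← integral_re (L2.integrable_inner (𝕜 := 𝕜) (hH.toLp H) (hH.toLp H))]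
    refine integral_congr_ae ?_
    filter_upwards [hH.coeFn_toLp] with s h1
    simp only [RCLike.inner_apply']
    rw [h1, RCLike.conj_mul]
    norm_cast
  calc ‖∫ s, F s * starRingEnd 𝕜 (G s) ∂μ‖ ^ 2 = ‖(inner 𝕜 G' F')‖ ^ 2 := by rw [hI]
    _ ≤ (‖G'‖ * ‖F'‖) ^ 2 := by
        have := norm_inner_le_norm (𝕜 := 𝕜) G' F'
        exact pow_le_pow_left₀ (norm_nonneg _) this 2
    _ = (∫ s, ‖F s‖ ^ 2 ∂μ) * (∫ s, ‖G s‖ ^ 2 ∂μ) := by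
        rw [mul_pow, hnorm F hF, hnorm G hG]; ring

lemma quad_aux (u z Z : 𝕜) (h : 0 ≤ RCLike.re ((Z - u) * (starRingEnd 𝕜 u - starRingEnd 𝕜 z))) :
    ‖u‖ ^ 2 ≤ RCLike.re (Z * starRingEnd 𝕜 u) + RCLike.re (u * starRingEnd 𝕜 z)
      - RCLike.re (Z * starRingEnd 𝕜 z) := by
  have e : (Z - u) * (starRingEnd 𝕜 u - starRingEnd 𝕜 z) =
      Z * starRingEnd 𝕜 u + u * starRingEnd 𝕜 z - Z * starRingEnd 𝕜 z
        - u * starRingEnd 𝕜 u := by ring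
  rw [e] at h
  simp only [map_sub, map_add] at h
  have hu : RCLike.re (u * starRingEnd 𝕜 u) = ‖u‖ ^ 2 := by
    rw [RCLike.mul_conj]; norm_cast
  linarith

lemma key_aux (μ : Measure Ω) [IsFiniteMeasure μ] {f : Ω → 𝕜} (hf : MemLp f 2 μ)
    {z Z : 𝕜} (hzZ : 0 < RCLike.re (Z * starRingEnd 𝕜 z))
    (h1 : ∀ᵐ s ∂μ, 0 ≤ RCLike.re ((Z - f s) * (starRingEnd 𝕜 (f s) - starRingEnd 𝕜 z))) :
    (μ Set.univ).toReal * ∫ s, ‖f s‖ ^ 2 ∂μ ≤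
      (1 + grussM z Z ^ 2 / 4) * ‖∫ s, f s ∂μ‖ ^ 2 := by
  set m := (μ Set.univ).toReal with hm_def
  have hm0 : 0 ≤ m := ENNReal.toReal_nonneg
  have hint : Integrable f μ := hf.integrable one_le_two
  have hconj : Integrable (fun s => starRingEnd 𝕜 (f s)) μ :=
    memLp_one_iff_integrable.mp (memℒp_conj (memLp_one_iff_integrable.mpr hint))
  have hsq : Integrable (fun s => ‖f s‖ ^ 2) μ := (memLp_two_iff_integrable_sq_norm hf.1).mp hf
  set A := ∫ s, f s ∂μ with hA_def
  have hi1 : Integrable (fun s => RCLike.re (Z * starRingEnd 𝕜 (f s))) μ :=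
    (hconj.const_mul Z).re
  have hi2 : Integrable (fun s => RCLike.re (f s * starRingEnd 𝕜 z)) μ :=
    (hint.mul_const (starRingEnd 𝕜 z)).re
  have hpt : ∀ᵐ s ∂μ, ‖f s‖ ^ 2 ≤ RCLike.re (Z * starRingEnd 𝕜 (f s))
      + RCLike.re (f s * starRingEnd 𝕜 z) - RCLike.re (Z * starRingEnd 𝕜 z) :=
    h1.mono fun s hs => quad_aux (f s) z Z hs
  have hIle : ∫ s, ‖f s‖ ^ 2 ∂μ ≤ RCLike.re (Z * starRingEnd 𝕜 A)
      + RCLike.re (A * starRingEnd 𝕜 z) - m * RCLike.re (Z * starRingEnd 𝕜 z) := by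
    have hi12 : Integrable (fun s => RCLike.re (Z * starRingEnd 𝕜 (f s))
        + RCLike.re (f s * starRingEnd 𝕜 z)) μ := hi1.add hi2
    have hi123 : Integrable (fun s => RCLike.re (Z * starRingEnd 𝕜 (f s))
        + RCLike.re (f s * starRingEnd 𝕜 z) - RCLike.re (Z * starRingEnd 𝕜 z)) μ :=
      hi12.sub (integrable_const _)
    have hmono := integral_mono_ae hsq hi123 hpt
    rw [integral_sub hi12 (integrable_const _), integral_add hi1 hi2,
      integral_const, integral_re (hconj.const_mul Z), integral_re (hint.mul_const _),
      integral_const_mul, integral_mul_const, integral_conj] at hmono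
    simpa [smul_eq_mul, measureReal_def] using hmono
  have hre : RCLike.re (Z * starRingEnd 𝕜 A) + RCLike.re (A * starRingEnd 𝕜 z)
      ≤ (‖Z‖ + ‖z‖) * ‖A‖ := by
    have h1' : RCLike.re (A * starRingEnd 𝕜 z) = RCLike.re (z * starRingEnd 𝕜 A) := by
      rw [← RCLike.conj_re (A * starRingEnd 𝕜 z)]
      simp [mul_comm]
    rw [h1', ← map_add, ← add_mul]
    calc RCLike.re ((Z + z) * starRingEnd 𝕜 A) ≤ ‖(Z + z) * starRingEnd 𝕜 A‖ :=
          RCLike.re_le_norm _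
      _ = ‖Z + z‖ * ‖A‖ := by rw [norm_mul, RCLike.norm_conj]
      _ ≤ (‖Z‖ + ‖z‖) * ‖A‖ := by
          exact mul_le_mul_of_nonneg_right (norm_add_le _ _) (norm_nonneg _)
  set p := RCLike.re (Z * starRingEnd 𝕜 z) with hp_def
  set r := ‖A‖ with hr_def
  set b := ‖Z‖ + ‖z‖ with hb_def
  have hM2 : p * grussM z Z ^ 2 = (‖Z‖ - ‖z‖) ^ 2 + 4 * (‖Z‖ * ‖z‖ - p) := grussM_sq_mul hzZ
  have hI2 : ∫ s, ‖f s‖ ^ 2 ∂μ ≤ b * r - m * p := le_trans hIle (by linarith)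
  have hmI : m * ∫ s, ‖f s‖ ^ 2 ∂μ ≤ m * (b * r - m * p) :=
    mul_le_mul_of_nonneg_left hI2 hm0
  have hpM : 4 * p + p * grussM z Z ^ 2 = b ^ 2 := by rw [hM2, hb_def]; ring
  have hcoef : (1 : ℝ) + grussM z Z ^ 2 / 4 = b ^ 2 / (4 * p) := by
    field_simp
    linarith
  rw [hcoef, div_mul_eq_mul_div, le_div_iff₀ (by positivity)]
  nlinarith [sq_nonneg (b * r - 2 * m * p), hmI, hzZ, hm0]

lemma var_aux (μ : Measure Ω) [IsFiniteMeasure μ] {f : Ω → 𝕜} (hf : MemLp f 2 μ) (a : 𝕜) :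
    ∫ s, ‖f s - a‖ ^ 2 ∂μ = ∫ s, ‖f s‖ ^ 2 ∂μ
      - 2 * RCLike.re ((∫ s, f s ∂μ) * starRingEnd 𝕜 a)
      + (μ Set.univ).toReal * ‖a‖ ^ 2 := by
  have hint : Integrable f μ := hf.integrable one_le_two
  have hsq : Integrable (fun s => ‖f s‖ ^ 2) μ := (memLp_two_iff_integrable_sq_norm hf.1).mp hf
  have hpt : ∀ s, ‖f s - a‖ ^ 2 = ‖f s‖ ^ 2 - 2 * RCLike.re (f s * starRingEnd 𝕜 a) + ‖a‖ ^ 2 := by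
    intro s
    have h := @norm_sub_sq 𝕜 𝕜 _ _ _ (f s) a
    rw [RCLike.inner_apply'] at h
    have : RCLike.re (starRingEnd 𝕜 (f s) * a) = RCLike.re (f s * starRingEnd 𝕜 a) := by
      rw [← RCLike.conj_re (starRingEnd 𝕜 (f s) * a)]
      simp [mul_comm]
    rw [this] at h
    exact h
  simp_rw [hpt]
  have hre : Integrable (fun s => 2 * RCLike.re (f s * starRingEnd 𝕜 a)) μ :=
    ((hint.mul_const (starRingEnd 𝕜 a)).re.const_mul 2)
  have hsub : Integrable (fun s => ‖f s‖ ^ 2 - 2 * RCLike.re (f s * starRingEnd 𝕜 a)) μ :=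
    hsq.sub hre
  rw [integral_add hsub (integrable_const _), integral_sub hsq hre,
    integral_const_mul, integral_re (hint.mul_const _), integral_mul_const, integral_const,
    smul_eq_mul, measureReal_def]

end Aux

/-- **A Grüss type inequality for integral means** (Corollary 5). -/
theorem gruss_integral_mean {Ω 𝕜 : Type*} [MeasurableSpace Ω] [RCLike 𝕜]
    (μ : Measure Ω) (hμ0 : 0 < μ Set.univ) (hμ : μ Set.univ < ⊤)
    (f g : Ω → 𝕜) (hf : MemLp f 2 μ) (hg : MemLp g 2 μ)
    (z Z t T : 𝕜)
    (hzZ : 0 < RCLike.re (Z * starRingEnd 𝕜 z))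
    (htT : 0 < RCLike.re (T * starRingEnd 𝕜 t))
    (h1 : ∀ᵐ s ∂μ, 0 ≤ RCLike.re ((Z - f s) * (starRingEnd 𝕜 (f s) - starRingEnd 𝕜 z)))
    (h2 : ∀ᵐ s ∂μ, 0 ≤ RCLike.re ((T - g s) * (starRingEnd 𝕜 (g s) - starRingEnd 𝕜 t))) :
    ‖((1 / (μ Set.univ).toReal) • ∫ s, f s * starRingEnd 𝕜 (g s) ∂μ) -
        ((1 / (μ Set.univ).toReal) • ∫ s, f s ∂μ) *
          ((1 / (μ Set.univ).toReal) • ∫ s, starRingEnd 𝕜 (g s) ∂μ)‖ ≤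
      (1 / 4 : ℝ) * grussM z Z * grussM t T *
        ‖((1 / (μ Set.univ).toReal) • ∫ s, f s ∂μ) *
          ((1 / (μ Set.univ).toReal) • ∫ s, starRingEnd 𝕜 (g s) ∂μ)‖ := by
  haveI : IsFiniteMeasure μ := ⟨hμ⟩
  set m := (μ Set.univ).toReal with hm_def
  have hm : 0 < m := ENNReal.toReal_pos hμ0.ne' hμ.ne
  set c : ℝ := 1 / m with hc_def
  have hc : 0 < c := by positivity
  have hcm : c * m = 1 := by rw [hc_def]; field_simp
  set A := ∫ s, f s ∂μ with hA_def
  set A' := ∫ s, g s ∂μ with hA'_def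
  have hB : ∫ s, starRingEnd 𝕜 (g s) ∂μ = starRingEnd 𝕜 A' := integral_conj
  set a : 𝕜 := (c : 𝕜) * A with ha_def
  set a' : 𝕜 := (c : 𝕜) * A' with ha'_def
  set F : Ω → 𝕜 := fun s => f s - a with hF_def
  set G : Ω → 𝕜 := fun s => g s - a' with hG_def
  have hF : MemLp F 2 μ := hf.sub (memLp_const a)
  have hG : MemLp G 2 μ := hg.sub (memLp_const a')
  have hfg : Integrable (fun s => f s * starRingEnd 𝕜 (g s)) μ := integrable_mul_conj hf hg
  have hfint : Integrable f μ := hf.integrable one_le_two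
  have hgconj : Integrable (fun s => starRingEnd 𝕜 (g s)) μ :=
    memLp_one_iff_integrable.mp (memℒp_conj (memLp_one_iff_integrable.mpr
      (hg.integrable one_le_two)))
  -- expand ∫ F conj G
  have hexp : ∫ s, F s * starRingEnd 𝕜 (G s) ∂μ =
      (∫ s, f s * starRingEnd 𝕜 (g s) ∂μ) - (c : 𝕜) * (A * starRingEnd 𝕜 A') := by
    have hpt : ∀ s, F s * starRingEnd 𝕜 (G s) =
        f s * starRingEnd 𝕜 (g s) - a * starRingEnd 𝕜 (g s)
          - starRingEnd 𝕜 a' * f s + a * starRingEnd 𝕜 a' := by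
      intro s; simp only [hF_def, hG_def, map_sub]; ring
    simp_rw [hpt]
    have hh1 : Integrable (fun s => f s * starRingEnd 𝕜 (g s) - a * starRingEnd 𝕜 (g s)) μ :=
      hfg.sub (hgconj.const_mul a)
    have hh2 : Integrable (fun s => f s * starRingEnd 𝕜 (g s) - a * starRingEnd 𝕜 (g s)
        - starRingEnd 𝕜 a' * f s) μ := hh1.sub (hfint.const_mul _)
    rw [integral_add hh2 (integrable_const _),
      integral_sub hh1 (hfint.const_mul _),
      integral_sub hfg (hgconj.const_mul a), integral_const_mul, integral_const_mul,
      integral_const, hB, measureReal_def, ← hm_def]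
    have hconja' : starRingEnd 𝕜 a' = (c : 𝕜) * starRingEnd 𝕜 A' := by
      rw [ha'_def, map_mul, RCLike.conj_ofReal]
    rw [ha_def, hconja', RCLike.real_smul_eq_coe_mul]
    have hmc1 : ((m : ℝ) : 𝕜) * ((c : ℝ) : 𝕜) = 1 := by
      rw [← RCLike.ofReal_mul, mul_comm m c, hcm, RCLike.ofReal_one]
    linear_combination ((c : 𝕜) * A * starRingEnd 𝕜 A') * hmc1
  -- variance bounds
  have hvarF : ∫ s, ‖F s‖ ^ 2 ∂μ ≤ grussM z Z ^ 2 / 4 * (c * ‖A‖ ^ 2) := by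
    have hkey := key_aux μ hf hzZ h1
    have hvar := var_aux μ hf a
    have hreA : RCLike.re (A * starRingEnd 𝕜 a) = c * ‖A‖ ^ 2 := by
      rw [ha_def, map_mul (starRingEnd 𝕜), RCLike.conj_ofReal, show A * ((c : 𝕜) * starRingEnd 𝕜 A)
        = (c : 𝕜) * (A * starRingEnd 𝕜 A) by ring, RCLike.mul_conj]
      norm_cast
    have hna : ‖a‖ ^ 2 = c ^ 2 * ‖A‖ ^ 2 := by
      rw [ha_def, norm_mul, mul_pow, RCLike.norm_ofReal, abs_of_pos hc]
    rw [hvar, hreA, hna]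
    have hIle : ∫ s, ‖f s‖ ^ 2 ∂μ ≤ c * ((1 + grussM z Z ^ 2 / 4) * ‖A‖ ^ 2) := by
      have := mul_le_mul_of_nonneg_left hkey hc.le
      rwa [← mul_assoc, hcm, one_mul] at this
    have hmc2 : m * (c ^ 2 * ‖A‖ ^ 2) = c * ‖A‖ ^ 2 := by
      rw [hc_def]; field_simp; try ring
    rw [hmc2]
    nlinarith [sq_nonneg ‖A‖]
  have hvarG : ∫ s, ‖G s‖ ^ 2 ∂μ ≤ grussM t T ^ 2 / 4 * (c * ‖A'‖ ^ 2) := by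
    have hkey := key_aux μ hg htT h2
    have hvar := var_aux μ hg a'
    have hreA : RCLike.re (A' * starRingEnd 𝕜 a') = c * ‖A'‖ ^ 2 := by
      rw [ha'_def, map_mul (starRingEnd 𝕜), RCLike.conj_ofReal, show A' * ((c : 𝕜) * starRingEnd 𝕜 A')
        = (c : 𝕜) * (A' * starRingEnd 𝕜 A') by ring, RCLike.mul_conj]
      norm_cast
    have hna : ‖a'‖ ^ 2 = c ^ 2 * ‖A'‖ ^ 2 := by
      rw [ha'_def, norm_mul, mul_pow, RCLike.norm_ofReal, abs_of_pos hc]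
    rw [hvar, hreA, hna]
    have hIle : ∫ s, ‖g s‖ ^ 2 ∂μ ≤ c * ((1 + grussM t T ^ 2 / 4) * ‖A'‖ ^ 2) := by
      have := mul_le_mul_of_nonneg_left hkey hc.le
      rwa [← mul_assoc, hcm, one_mul] at this
    have hmc2 : m * (c ^ 2 * ‖A'‖ ^ 2) = c * ‖A'‖ ^ 2 := by
      rw [hc_def]; field_simp; try ring
    rw [hmc2]
    nlinarith [sq_nonneg ‖A'‖]
  -- Cauchy-Schwarz
  have hcs := cs_aux hF hG
  have hprod : ‖∫ s, F s * starRingEnd 𝕜 (G s) ∂μ‖ ≤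
      grussM z Z / 2 * (grussM t T / 2) * (c * (‖A‖ * ‖A'‖)) := by
    have hrhs : (grussM z Z ^ 2 / 4 * (c * ‖A‖ ^ 2)) * (grussM t T ^ 2 / 4 * (c * ‖A'‖ ^ 2)) =
        (grussM z Z / 2 * (grussM t T / 2) * (c * (‖A‖ * ‖A'‖))) ^ 2 := by ring
    have hF2nn : (0:ℝ) ≤ ∫ s, ‖F s‖ ^ 2 ∂μ := integral_nonneg fun s => sq_nonneg _
    have hG2nn : (0:ℝ) ≤ ∫ s, ‖G s‖ ^ 2 ∂μ := integral_nonneg fun s => sq_nonneg _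
    have hsq : ‖∫ s, F s * starRingEnd 𝕜 (G s) ∂μ‖ ^ 2 ≤
        (grussM z Z / 2 * (grussM t T / 2) * (c * (‖A‖ * ‖A'‖))) ^ 2 := by
      rw [← hrhs]
      calc ‖∫ s, F s * starRingEnd 𝕜 (G s) ∂μ‖ ^ 2
          ≤ (∫ s, ‖F s‖ ^ 2 ∂μ) * (∫ s, ‖G s‖ ^ 2 ∂μ) := hcs
        _ ≤ (grussM z Z ^ 2 / 4 * (c * ‖A‖ ^ 2)) * (grussM t T ^ 2 / 4 * (c * ‖A'‖ ^ 2)) := by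
            apply mul_le_mul hvarF hvarG hG2nn
            positivity
    have hrhsnn : 0 ≤ grussM z Z / 2 * (grussM t T / 2) * (c * (‖A‖ * ‖A'‖)) := by
      have := grussM_nonneg z Z; have := grussM_nonneg t T
      positivity
    nlinarith [norm_nonneg (∫ s, F s * starRingEnd 𝕜 (G s) ∂μ)]
  -- assemble
  simp only [RCLike.real_smul_eq_coe_mul, hB]
  have hlhs : ((c : 𝕜) * ∫ s, f s * starRingEnd 𝕜 (g s) ∂μ) -
      ((c : 𝕜) * A) * ((c : 𝕜) * starRingEnd 𝕜 A') =
      (c : 𝕜) * ∫ s, F s * starRingEnd 𝕜 (G s) ∂μ := by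
    rw [hexp]; ring
  rw [hlhs]
  rw [norm_mul, norm_mul, norm_mul, norm_mul, RCLike.norm_ofReal, abs_of_pos hc,
    RCLike.norm_conj]
  calc c * ‖∫ s, F s * starRingEnd 𝕜 (G s) ∂μ‖
      ≤ c * (grussM z Z / 2 * (grussM t T / 2) * (c * (‖A‖ * ‖A'‖))) :=
        mul_le_mul_of_nonneg_left hprod hc.le
    _ = 1 / 4 * grussM z Z * grussM t T * (c * ‖A‖ * (c * ‖A'‖)) := by ring
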